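/- Let G be a finite group, g ∈ G, u a unit of ℤ⟨g⟩, and 𝒩 : ⟨g⟩ = N₀ ⊴ N₁ ⊴ ... ⊴ N_m = G a subnormal series. Define c⁰(u) = u and cⁱ(u) = ∏_{h ∈ T_i} (cⁱ⁻¹(u))^h where T_i is a transversal of N_{i-1} in N_i. Then for every x ∈ N_{i-1}, (cⁱ⁻¹(u))^x = cⁱ⁻¹(u); in particular cⁱ⁻¹(u) is central in ℤN_{i-1} and cⁱ(u) is independent of the choice of transversal T_i. -/

import Mathlib

/-- Conjugation `a^h = h⁻¹ a h` of group-ring elements by group elements. -/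
noncomputable def conjBy {G : Type*} [Group G] (h : G) (a : MonoidAlgebra ℤ G) :
    MonoidAlgebra ℤ G :=
  MonoidAlgebra.of ℤ G h⁻¹ * a * MonoidAlgebra.of ℤ G h

/-- A subnormal series `⟨g⟩ = N₀ ⊴ N₁ ⊴ ⋯ ⊴ N_len = G`. -/
structure SubnormalSeries (G : Type*) [Group G] (g : G) where
  len : ℕ
  N : ℕ → Subgroup G
  bot_eq : N 0 = Subgroup.zpowers g
  top_eq : N len = ⊤
  le_succ : ∀ i, N i ≤ N (i + 1)
  conj_mem : ∀ i, ∀ x ∈ N (i + 1), ∀ y ∈ N i, x⁻¹ * y * x ∈ N i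

/-- A choice, for each `i`, of a (right) transversal `T i` of `N i` in `N (i+1)`,
recorded as a duplicate-free list. -/
structure TransversalSystem {G : Type*} [Group G] {g : G}
    (S : SubnormalSeries G g) where
  T : ℕ → List G
  nodup : ∀ i, (T i).Nodup
  mem : ∀ i, ∀ t ∈ T i, t ∈ S.N (i + 1)
  rep : ∀ i, ∀ y ∈ S.N (i + 1), ∃! t, t ∈ T i ∧ y * t⁻¹ ∈ S.N i

/-- The construction `c⁰(u) = u`, `cⁱ(u) = ∏_{h ∈ T i} (cⁱ⁻¹(u))^h`. -/
noncomputable def cSeq {G : Type*} [Group G] {g : G} (S : SubnormalSeries G g)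
    (TS : TransversalSystem S) (u : MonoidAlgebra ℤ G) : ℕ → MonoidAlgebra ℤ G
  | 0 => u
  | i + 1 => ((TS.T i).map fun h => conjBy h (cSeq S TS u i)).prod

section Aux

variable {G : Type*} [Group G]

lemma of_mul_of_inv (h : G) :
    (MonoidAlgebra.of ℤ G h) * (MonoidAlgebra.of ℤ G h⁻¹) = 1 := by
  rw [← map_mul, mul_inv_cancel, map_one]

lemma conjBy_eq_mapDomain (h : G) (a : MonoidAlgebra ℤ G) :
    conjBy h a = MonoidAlgebra.ofCoeff (Finsupp.mapDomain (fun y => h⁻¹ * y * h) a.coeff) := by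
  induction a using MonoidAlgebra.induction_linear with
  | zero => simp [conjBy]
  | add f g hf hg =>
      simp only [conjBy] at *
      rw [mul_add, add_mul, hf, hg, MonoidAlgebra.coeff_add, Finsupp.mapDomain_add,
        MonoidAlgebra.ofCoeff_add]
  | single y c =>
      simp only [conjBy, MonoidAlgebra.of_apply, MonoidAlgebra.coeff_single,
        Finsupp.mapDomain_single, MonoidAlgebra.ofCoeff_single]
      rw [MonoidAlgebra.single_mul_single, MonoidAlgebra.single_mul_single,
        one_mul, mul_one]

lemma conjBy_mul (h : G) (a b : MonoidAlgebra ℤ G) :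
    conjBy h (a * b) = conjBy h a * conjBy h b := by
  simp only [conjBy, mul_assoc]
  rw [← mul_assoc (MonoidAlgebra.of ℤ G h) (MonoidAlgebra.of ℤ G h⁻¹),
    of_mul_of_inv, one_mul]

lemma conjBy_one (h : G) : conjBy h (1 : MonoidAlgebra ℤ G) = 1 := by
  simp only [conjBy, mul_one]
  rw [← map_mul, inv_mul_cancel, map_one]

lemma conjBy_conjBy (k h : G) (a : MonoidAlgebra ℤ G) :
    conjBy k (conjBy h a) = conjBy (h * k) a := by
  rw [conjBy_eq_mapDomain, conjBy_eq_mapDomain, conjBy_eq_mapDomain,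
    MonoidAlgebra.coeff_ofCoeff, ← Finsupp.mapDomain_comp]
  have hf : ((fun y => k⁻¹ * y * k) ∘ fun y => h⁻¹ * y * h) =
      fun y => (h * k)⁻¹ * y * (h * k) := by
    funext y
    simp [mul_inv_rev, mul_assoc]
  rw [hf]

lemma conjBy_list_prod (h : G) (l : List (MonoidAlgebra ℤ G)) :
    conjBy h l.prod = (l.map (conjBy h)).prod := by
  induction l with
  | nil => simpa using conjBy_one h
  | cons a l ih => simp [conjBy_mul, ih]

lemma support_conjBy [DecidableEq G] (h : G) (a : MonoidAlgebra ℤ G) :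
    (conjBy h a).coeff.support ⊆ a.coeff.support.image (fun y => h⁻¹ * y * h) := by
  classical
  rw [conjBy_eq_mapDomain, MonoidAlgebra.coeff_ofCoeff]
  exact Finsupp.mapDomain_support

lemma commute_of_forall_conj (a b : MonoidAlgebra ℤ G) (N : Subgroup G)
    (ha : ∀ x ∈ N, conjBy x a = a) (hb : ↑b.coeff.support ⊆ (N : Set G)) :
    a * b = b * a := by
  classical
  have key : ∀ x ∈ N, a * MonoidAlgebra.of ℤ G x = MonoidAlgebra.of ℤ G x * a := by
    intro x hx
    have hfix := ha x hx
    simp only [conjBy] at hfix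
    calc a * MonoidAlgebra.of ℤ G x
        = (MonoidAlgebra.of ℤ G x * MonoidAlgebra.of ℤ G x⁻¹) *
            (a * MonoidAlgebra.of ℤ G x) := by rw [of_mul_of_inv, one_mul]
      _ = MonoidAlgebra.of ℤ G x *
            (MonoidAlgebra.of ℤ G x⁻¹ * a * MonoidAlgebra.of ℤ G x) := by
          rw [mul_assoc, ← mul_assoc (MonoidAlgebra.of ℤ G x⁻¹)]
      _ = MonoidAlgebra.of ℤ G x * a := by rw [hfix]
  have hb2 : b = ∑ x ∈ b.coeff.support, MonoidAlgebra.single x (b.coeff x) := by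
    conv_lhs => rw [← MonoidAlgebra.sum_coeff_single b]
    rfl
  rw [hb2, Finset.mul_sum, Finset.sum_mul]
  refine Finset.sum_congr rfl fun x hx => ?_
  have hxN : x ∈ N := hb (Finset.mem_coe.mpr hx)
  have hsingle : (MonoidAlgebra.single x (b.coeff x) : MonoidAlgebra ℤ G)
      = (b.coeff x) • MonoidAlgebra.of ℤ G x := by
    rw [MonoidAlgebra.of_apply, MonoidAlgebra.smul_single', mul_one]
  rw [hsingle, mul_smul_comm, smul_mul_assoc, key x hxN]

lemma support_list_prod (N : Subgroup G) (l : List (MonoidAlgebra ℤ G))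
    (h : ∀ a ∈ l, ↑a.coeff.support ⊆ (N : Set G)) :
    ↑(l.prod).coeff.support ⊆ (N : Set G) := by
  classical
  induction l with
  | nil =>
      intro x hx
      simp only [List.prod_nil] at hx
      have hx' : x ∈ ((1 : MonoidAlgebra ℤ G).coeff.support : Set G) := hx
      rw [MonoidAlgebra.one_def, MonoidAlgebra.coeff_single] at hx'
      have := Finsupp.support_single_subset (Finset.mem_coe.mp hx')
      simp only [Finset.mem_singleton] at this
      subst this
      exact one_mem N
  | cons a l ih =>
      intro x hx
      simp only [List.prod_cons] at hx
      have hx' := MonoidAlgebra.support_coeff_mul_subset a l.prod (Finset.mem_coe.mp hx)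
      rw [Finset.mem_mul] at hx'
      obtain ⟨y, hy, z, hz, rfl⟩ := hx'
      exact mul_mem (h a (List.mem_cons_self (a := a) (l := l)) (Finset.mem_coe.mpr hy))
        (ih (fun b hb => h b (List.mem_cons_of_mem a hb)) (Finset.mem_coe.mpr hz))

variable {g : G}

lemma conj_commute (S : SubnormalSeries G g) (i : ℕ) (a : MonoidAlgebra ℤ G)
    (hsupp : ↑a.coeff.support ⊆ (S.N i : Set G))
    (hfix : ∀ x ∈ S.N i, conjBy x a = a)
    {s t : G} (hs : s ∈ S.N (i + 1)) (ht : t ∈ S.N (i + 1)) :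
    Commute (conjBy s a) (conjBy t a) := by
  classical
  have hts : t * s⁻¹ ∈ S.N (i + 1) := mul_mem ht (inv_mem hs)
  have hb : conjBy t a = conjBy s (conjBy (t * s⁻¹) a) := by
    rw [conjBy_conjBy, inv_mul_cancel_right]
  set b := conjBy (t * s⁻¹) a with hbdef
  have hbsupp : ↑b.coeff.support ⊆ (S.N i : Set G) := by
    intro y hy
    have hy' := support_conjBy (t * s⁻¹) a (Finset.mem_coe.mp hy)
    rw [Finset.mem_image] at hy'
    obtain ⟨z, hz, rfl⟩ := hy'
    exact S.conj_mem i (t * s⁻¹) hts z (hsupp (Finset.mem_coe.mpr hz))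
  have hab : a * b = b * a := commute_of_forall_conj a b (S.N i) hfix hbsupp
  have : conjBy s a * conjBy t a = conjBy t a * conjBy s a := by
    rw [hb, ← conjBy_mul, ← conjBy_mul, hab]
  exact this

lemma prod_transversal_eq (S : SubnormalSeries G g) (i : ℕ)
    (a : MonoidAlgebra ℤ G)
    (hsupp : ↑a.coeff.support ⊆ (S.N i : Set G))
    (hfix : ∀ x ∈ S.N i, conjBy x a = a)
    (L₁ L₂ : List G)
    (h₁n : L₁.Nodup) (h₁m : ∀ t ∈ L₁, t ∈ S.N (i + 1))
    (h₁r : ∀ y ∈ S.N (i + 1), ∃! t, t ∈ L₁ ∧ y * t⁻¹ ∈ S.N i)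
    (h₂n : L₂.Nodup) (h₂m : ∀ t ∈ L₂, t ∈ S.N (i + 1))
    (h₂r : ∀ y ∈ S.N (i + 1), ∃! t, t ∈ L₂ ∧ y * t⁻¹ ∈ S.N i) :
    (L₁.map fun h => conjBy h a).prod = (L₂.map fun h => conjBy h a).prod := by
  classical
  -- the map sending t to its representative in L₂
  let σ : G → G := fun t =>
    if h : t ∈ S.N (i + 1) then (h₂r t h).exists.choose else 1
  have hσ : ∀ t (ht : t ∈ S.N (i + 1)),
      (σ t ∈ L₂ ∧ t * (σ t)⁻¹ ∈ S.N i) := by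
    intro t ht
    simp only [σ, dif_pos ht]
    exact (h₂r t ht).exists.choose_spec
  have hσu : ∀ t (ht : t ∈ S.N (i + 1)), ∀ t', t' ∈ L₂ → t * t'⁻¹ ∈ S.N i →
      t' = σ t := by
    intro t ht t' ht' htn
    simp only [σ, dif_pos ht]
    exact (h₂r t ht).unique ⟨ht', htn⟩
      ⟨(h₂r t ht).exists.choose_spec.1, (h₂r t ht).exists.choose_spec.2⟩
  -- injectivity of σ on L₁
  have hinj : ∀ t₁ ∈ L₁, ∀ t₂ ∈ L₁, σ t₁ = σ t₂ → t₁ = t₂ := by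
    intro t₁ h₁ t₂ h₂ he
    have ht₁ := h₁m t₁ h₁
    have ht₂ := h₁m t₂ h₂
    have hn₁ := (hσ t₁ ht₁).2
    have hn₂ := (hσ t₂ ht₂).2
    rw [he] at hn₁
    have h12 : t₁ * t₂⁻¹ ∈ S.N i := by
      have := mul_mem hn₁ (inv_mem hn₂)
      simpa [mul_assoc] using this
    have h11 : t₁ * t₁⁻¹ ∈ S.N i := by
      rw [mul_inv_cancel]; exact one_mem _
    exact ((h₁r t₁ ht₁).unique ⟨h₂, h12⟩ ⟨h₁, h11⟩).symm
  -- σ maps L₁ into L₂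
  have hsub : ∀ t ∈ L₁, σ t ∈ L₂ := fun t ht => (hσ t (h₁m t ht)).1
  -- a symmetric map from L₂ into L₁, for the length count
  let τ : G → G := fun t =>
    if h : t ∈ S.N (i + 1) then (h₁r t h).exists.choose else 1
  have hτ : ∀ t (ht : t ∈ S.N (i + 1)), (τ t ∈ L₁ ∧ t * (τ t)⁻¹ ∈ S.N i) := by
    intro t ht
    simp only [τ, dif_pos ht]
    exact (h₁r t ht).exists.choose_spec
  have hinjτ : ∀ t₁ ∈ L₂, ∀ t₂ ∈ L₂, τ t₁ = τ t₂ → t₁ = t₂ := by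
    intro t₁ h₁ t₂ h₂ he
    have ht₁ := h₂m t₁ h₁
    have ht₂ := h₂m t₂ h₂
    have hn₁ := (hτ t₁ ht₁).2
    have hn₂ := (hτ t₂ ht₂).2
    rw [he] at hn₁
    have h12 : t₁ * t₂⁻¹ ∈ S.N i := by
      have := mul_mem hn₁ (inv_mem hn₂)
      simpa [mul_assoc] using this
    have h11 : t₁ * t₁⁻¹ ∈ S.N i := by
      rw [mul_inv_cancel]; exact one_mem _
    exact ((h₂r t₁ ht₁).unique ⟨h₂, h12⟩ ⟨h₁, h11⟩).symm
  -- lengths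
  have hlen₂ : L₂.length ≤ L₁.length := by
    have hnod : (L₂.map τ).Nodup := h₂n.map_on hinjτ
    have hss : (L₂.map τ) ⊆ L₁ := by
      intro x hx
      rw [List.mem_map] at hx
      obtain ⟨t, ht, rfl⟩ := hx
      exact (hτ t (h₂m t ht)).1
    simpa using (List.subperm_of_subset hnod hss).length_le
  -- L₁.map σ is a permutation of L₂
  have hperm : List.Perm (L₁.map σ) L₂ := by
    refine (List.subperm_of_subset (h₁n.map_on hinj) ?_).perm_of_length_le ?_
    · intro x hx
      rw [List.mem_map] at hx
      obtain ⟨t, ht, rfl⟩ := hx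
      exact hsub t ht
    · simpa using hlen₂
  -- conjugation only depends on the representative
  have hconj : ∀ t ∈ L₁, conjBy t a = conjBy (σ t) a := by
    intro t ht
    have htN := h₁m t ht
    have hn := (hσ t htN).2
    have ht2 : t = (t * (σ t)⁻¹) * σ t := by rw [inv_mul_cancel_right]
    conv_lhs => rw [ht2]
    rw [← conjBy_conjBy, hfix _ hn]
  have e1 : (L₁.map fun h => conjBy h a) = (L₁.map σ).map (fun h => conjBy h a) := by
    rw [List.map_map]
    exact List.map_congr_left hconj
  have hpair : ((L₁.map σ).map fun h => conjBy h a).Pairwise Commute := by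
    rw [List.pairwise_map]
    refine List.pairwise_of_forall_mem_list fun s hs t ht => ?_
    rw [List.mem_map] at hs ht
    obtain ⟨s', hs', rfl⟩ := hs
    obtain ⟨t', ht', rfl⟩ := ht
    exact conj_commute S i a hsupp hfix (h₂m _ (hsub s' hs'))
      (h₂m _ (hsub t' ht'))
  rw [e1]
  exact (hperm.map fun h => conjBy h a).prod_eq' hpair

lemma good_step (S : SubnormalSeries G g) (i : ℕ) (a : MonoidAlgebra ℤ G)
    (hsupp : ↑a.coeff.support ⊆ (S.N i : Set G))
    (hfix : ∀ x ∈ S.N i, conjBy x a = a)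
    (L : List G) (hLn : L.Nodup) (hLm : ∀ t ∈ L, t ∈ S.N (i + 1))
    (hLr : ∀ y ∈ S.N (i + 1), ∃! t, t ∈ L ∧ y * t⁻¹ ∈ S.N i) :
    ↑((L.map fun h => conjBy h a).prod).coeff.support ⊆ (S.N (i + 1) : Set G) ∧
      ∀ x ∈ S.N (i + 1),
        conjBy x (L.map fun h => conjBy h a).prod =
          (L.map fun h => conjBy h a).prod := by
  classical
  constructor
  · refine support_list_prod _ _ fun b hb => ?_
    rw [List.mem_map] at hb
    obtain ⟨t, ht, rfl⟩ := hb
    intro y hy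
    have hy' := support_conjBy t a (Finset.mem_coe.mp hy)
    rw [Finset.mem_image] at hy'
    obtain ⟨z, hz, rfl⟩ := hy'
    exact S.le_succ i (S.conj_mem i t (hLm t ht) z (hsupp (Finset.mem_coe.mpr hz)))
  · intro x hx
    rw [conjBy_list_prod, List.map_map]
    have e1 : (L.map ((conjBy x) ∘ fun h => conjBy h a)) =
        (L.map fun t => t * x).map (fun h => conjBy h a) := by
      rw [List.map_map]
      refine List.map_congr_left fun t _ => ?_
      simp only [Function.comp]
      rw [conjBy_conjBy]
    rw [e1]
    -- L.map (· * x) is also a transversal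
    refine prod_transversal_eq S i a hsupp hfix _ L ?_ ?_ ?_ hLn hLm hLr
    · exact hLn.map (fun t₁ t₂ h => mul_right_cancel h)
    · intro s hs
      rw [List.mem_map] at hs
      obtain ⟨t, ht, rfl⟩ := hs
      exact mul_mem (hLm t ht) hx
    · intro y hy
      obtain ⟨t, ⟨htL, htn⟩, htu⟩ := hLr (y * x⁻¹) (mul_mem hy (inv_mem hx))
      refine ⟨t * x, ⟨List.mem_map.mpr ⟨t, htL, rfl⟩, ?_⟩, ?_⟩
      · simpa [mul_inv_rev, mul_assoc] using htn
      · rintro s ⟨hsL, hsn⟩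
        rw [List.mem_map] at hsL
        obtain ⟨t', ht'L, rfl⟩ := hsL
        have : y * x⁻¹ * t'⁻¹ ∈ S.N i := by
          simpa [mul_inv_rev, mul_assoc] using hsn
        rw [htu t' ⟨ht'L, this⟩]

end Aux

theorem cSeq_fixed_and_transversal_independent {G : Type*} [Group G] [Fintype G]
    (g : G) (S : SubnormalSeries G g) (TS : TransversalSystem S)
    (u : MonoidAlgebra ℤ G) (hu : IsUnit u)
    (hsupp : (u.coeff.support : Set G) ⊆ (Subgroup.zpowers g : Subgroup G)) :
    (∀ i < S.len, ∀ x ∈ S.N i, conjBy x (cSeq S TS u i) = cSeq S TS u i) ∧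
      (∀ i < S.len, ∀ L : List G, L.Nodup → (∀ t ∈ L, t ∈ S.N (i + 1)) →
        (∀ y ∈ S.N (i + 1), ∃! t, t ∈ L ∧ y * t⁻¹ ∈ S.N i) →
        (L.map fun h => conjBy h (cSeq S TS u i)).prod = cSeq S TS u (i + 1)) := by
  classical
  have good : ∀ i, ↑(cSeq S TS u i).coeff.support ⊆ (S.N i : Set G) ∧
      ∀ x ∈ S.N i, conjBy x (cSeq S TS u i) = cSeq S TS u i := by
    intro i
    induction i with
    | zero =>
        constructor
        · simpa only [cSeq, S.bot_eq] using hsupp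
        · intro x hx
          rw [S.bot_eq] at hx
          show conjBy x u = u
          rw [conjBy_eq_mapDomain]
          have hcong : ∀ y ∈ u.coeff.support, x⁻¹ * y * x = id y := by
            intro y hy
            have hyg : y ∈ Subgroup.zpowers g := hsupp (Finset.mem_coe.mpr hy)
            obtain ⟨m, rfl⟩ := hx
            obtain ⟨k, rfl⟩ := hyg
            have hc : g ^ k * g ^ m = g ^ m * g ^ k :=
              ((Commute.refl g).zpow_zpow k m).eq
            calc (g ^ m)⁻¹ * g ^ k * g ^ m
                = (g ^ m)⁻¹ * (g ^ k * g ^ m) := by rw [mul_assoc]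
              _ = (g ^ m)⁻¹ * (g ^ m * g ^ k) := by rw [hc]
              _ = g ^ k := by rw [inv_mul_cancel_left]
              _ = id (g ^ k) := rfl
          rw [Finsupp.mapDomain_congr hcong, Finsupp.mapDomain_id, MonoidAlgebra.ofCoeff_coeff]
    | succ i ih =>
        have h := good_step S i (cSeq S TS u i) ih.1 ih.2 (TS.T i)
          (TS.nodup i) (TS.mem i) (TS.rep i)
        exact h
  constructor
  · intro i _ x hx
    exact (good i).2 x hx
  · intro i _ L hn hm hr
    exact prod_transversal_eq S i (cSeq S TS u i) (good i).1 (good i).2 L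
      (TS.T i) hn hm hr (TS.nodup i) (TS.mem i) (TS.rep i)
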